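/- If κ is a measurable cardinal, then ◊_κ(REG) holds: there is a sequence ⟨A_α : α < κ⟩ with A_α ⊆ α for every α < κ such that for every A ⊆ κ the set {α < κ : α is an infinite regular cardinal and A ∩ α = A_α} is stationary in κ. -/

import Mathlib

open Set

/-- `C` is unbounded in `κ`. -/
def IsUnboundedIn (κ : Ordinal.{0}) (C : Set Ordinal.{0}) : Prop :=
  ∀ α < κ, ∃ β ∈ C, α < β

/-- `C` contains all of its limit points below `κ`. -/
def IsClosedIn (κ : Ordinal.{0}) (C : Set Ordinal.{0}) : Prop :=
  ∀ α < κ, α ≠ 0 → (∀ β < α, ∃ γ ∈ C, β < γ ∧ γ < α) → α ∈ C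

/-- `C ⊆ κ` is club in `κ`: unbounded and closed. -/
def IsClubIn (κ : Ordinal.{0}) (C : Set Ordinal.{0}) : Prop :=
  C ⊆ Set.Iio κ ∧ IsUnboundedIn κ C ∧ IsClosedIn κ C

/-- `S` is stationary in `κ`: it meets every club subset of `κ`. -/
def IsStationaryIn (κ : Ordinal.{0}) (S : Set Ordinal.{0}) : Prop :=
  ∀ C, IsClubIn κ C → (S ∩ C).Nonempty

/-- The ordinal `α` is an infinite regular cardinal. -/
def IsRegOrd (α : Ordinal.{0}) : Prop :=
  ∃ c : Cardinal.{0}, c.IsRegular ∧ α = c.ord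

/-- The ordinal `α` is a strongly inaccessible cardinal. -/

def DCond (A : Ordinal → Set Ordinal) (α : Ordinal) (p : Set Ordinal × Set Ordinal) : Prop :=
  p.1 ⊆ Set.Iio α ∧ p.2 ⊆ Set.Iio α ∧ (∀ β < α, ∃ γ ∈ p.2, β < γ) ∧
    (∀ δ < α, δ ≠ 0 → (∀ β < δ, ∃ γ ∈ p.2, β < γ ∧ γ < δ) → δ ∈ p.2) ∧
    ∀ β ∈ p.2, IsRegOrd β → p.1 ∩ Set.Iio β ≠ A β

open scoped Classical in
noncomputable def DG : Ordinal → Set Ordinal × Set Ordinal :=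
  Ordinal.lt_wf.fix fun α IH =>
    if h : ∃ p, DCond (fun β => if hβ : β < α then (IH β hβ).1 else ∅) α p then h.choose
    else (∅, ∅)

noncomputable def DA (α : Ordinal) : Set Ordinal := (DG α).1

open scoped Classical in
theorem DG_eq (α : Ordinal) : DG α =
    if h : ∃ p, DCond (fun β => if hβ : β < α then (DG β).1 else ∅) α p then h.choose
    else (∅, ∅) := by
  rw [DG, WellFounded.fix_eq]

theorem DCond_congr {A A' : Ordinal → Set Ordinal} {α : Ordinal} {p}
    (h : ∀ β < α, A β = A' β) : DCond A α p ↔ DCond A' α p := by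
  unfold DCond
  refine and_congr_right fun h1 => and_congr_right fun h2 =>
    and_congr_right fun _ => and_congr_right fun _ => ?_
  constructor <;> intro hx β hβ hr
  · rw [← h β (h2 hβ)]; exact hx β hβ hr
  · rw [h β (h2 hβ)]; exact hx β hβ hr

theorem DG_spec {α : Ordinal} (hex : ∃ p, DCond DA α p) : DCond DA α (DG α) := by
  have hiff : ∀ p, DCond (fun β => if hβ : β < α then (DG β).1 else ∅) α p ↔ DCond DA α p :=
    fun p => DCond_congr fun β hβ => by simp only [hβ, dif_pos]; rfl
  have hex' : ∃ p, DCond (fun β => if hβ : β < α then (DG β).1 else ∅) α p :=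
    ⟨hex.choose, (hiff _).2 hex.choose_spec⟩
  rw [show DG α = hex'.choose from by rw [DG_eq, dif_pos hex']]
  exact (hiff _).1 hex'.choose_spec

theorem DA_subset (α : Ordinal) : DA α ⊆ Set.Iio α := by
  unfold DA
  rw [DG_eq]
  split
  · next h => exact h.choose_spec.1
  · exact empty_subset _

/-- The ordinal `α` is a strongly inaccessible cardinal. -/
def IsInaccOrd (α : Ordinal.{0}) : Prop :=
  ∃ c : Cardinal.{0}, c.IsInaccessible ∧ α = c.ord

/-- If `κ` is a measurable cardinal (uncountable, carrying a `κ`-complete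
nonprincipal ultrafilter `U` on the ordinals below `κ`), then `◊_κ(REG)` holds:
there is a sequence `⟨A_α : α < κ⟩` with `A_α ⊆ α` such that for every `S ⊆ κ`
the set of infinite regular cardinals `α < κ` with `S ∩ α = A_α` is stationary. -/
theorem measurable_implies_diamond_reg (κ : Cardinal.{0}) (hκ : Cardinal.aleph0 < κ)
    (U : Set (Set Ordinal.{0}))
    (hsub : ∀ X ∈ U, X ⊆ Set.Iio κ.ord)
    (htop : Set.Iio κ.ord ∈ U)
    (hup : ∀ X ∈ U, ∀ Y, Y ⊆ Set.Iio κ.ord → X ⊆ Y → Y ∈ U)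
    (hultra : ∀ X, X ⊆ Set.Iio κ.ord → X ∈ U ∨ (Set.Iio κ.ord \ X) ∈ U)
    (hnonprincipal : ∀ α : Ordinal.{0}, {α} ∉ U)
    (hcomplete : ∀ ι : Ordinal.{0}, ι ≠ 0 → ι.card < κ →
      ∀ f : Ordinal.{0} → Set Ordinal.{0}, (∀ β < ι, f β ∈ U) →
        (⋂ β ∈ Set.Iio ι, f β) ∈ U) :
    ∃ A : Ordinal.{0} → Set Ordinal.{0},
      (∀ α < κ.ord, A α ⊆ Set.Iio α) ∧
      ∀ S, S ⊆ Set.Iio κ.ord →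
        IsStationaryIn κ.ord
          {α | α < κ.ord ∧ IsRegOrd α ∧ S ∩ Set.Iio α = A α} := by
  classical
  have hκ0 : (0:Ordinal) < κ.ord := by
    rw [Cardinal.lt_ord]
    simpa using (Cardinal.aleph0_pos.trans hκ)
  have hordlim : Order.IsSuccLimit κ.ord := Cardinal.isSuccLimit_ord hκ.le
  have hne : ∀ X ∈ U, X.Nonempty := by
    intro X hX
    rcases X.eq_empty_or_nonempty with h | h
    · subst h
      exact absurd (hup ∅ hX {0} (by simpa using hκ0) (empty_subset _))
        (by simpa using hnonprincipal 0)
    · exact h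
  have hU2 : ∀ X ∈ U, ∀ Y ∈ U, X ∩ Y ∈ U := by
    intro X hX Y hY
    have h2 : ((2:Ordinal)).card < κ := by
      simpa using (Cardinal.nat_lt_aleph0 2).trans hκ
    have := hcomplete 2 (by norm_num) h2 (fun β => if β = 0 then X else Y) ?_
    · refine hup _ this _ (fun a ha => (hsub X hX) ha.1) ?_
      intro a ha
      simp only [mem_iInter] at ha
      constructor
      · have := ha 0 (by norm_num)
        simpa using this
      · have := ha 1 (by norm_num)
        simpa using this
    · intro β hβ
      by_cases h : β = 0 <;> simp [h, hX, hY]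
  have hsmall : ∀ γ < κ.ord, (Set.Iio κ.ord \ Set.Iio γ) ∈ U := by
    intro γ hγ
    have hsing : ∀ β : Ordinal, (Set.Iio κ.ord \ {β}) ∈ U := by
      intro β
      rcases hultra ({β} ∩ Set.Iio κ.ord) (inter_subset_right) with h | h
      · exact absurd (hup _ h {β} (by
          intro x hx
          rcases hx with rfl
          by_contra hb
          exact hb ((hne _ h).choose_spec.1 ▸ (hne _ h).choose_spec.2)) inter_subset_left)
          (hnonprincipal β)
      · refine hup _ h _ diff_subset ?_
        intro a ha
        exact ⟨ha.1, fun hb => ha.2 ⟨hb, ha.1⟩⟩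
    rcases eq_or_ne γ 0 with rfl | hγ0
    · have h0 : Set.Iio κ.ord \ Set.Iio (0:Ordinal) = Set.Iio κ.ord := by
        ext a; simp [not_lt_zero]
      rw [h0]; exact htop
    · have := hcomplete γ hγ0 (Cardinal.lt_ord.1 hγ) (fun β => Set.Iio κ.ord \ {β})
        (fun β _ => hsing β)
      refine hup _ this _ diff_subset ?_
      intro a ha
      simp only [mem_iInter, mem_diff, mem_singleton_iff] at ha
      have h0 := ha 0 (pos_iff_ne_zero.2 hγ0)
      exact ⟨h0.1, fun hlt => (ha a hlt).2 rfl⟩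
  -- minimal function and derived normal measure
  set r : (Ordinal.{0} → Ordinal.{0}) → (Ordinal.{0} → Ordinal.{0}) → Prop :=
    fun g g' => {α | α < κ.ord ∧ g α < g' α} ∈ U with hr
  haveI : IsIrrefl (Ordinal.{0} → Ordinal.{0}) r := by
    constructor
    intro g hg
    obtain ⟨a, ha⟩ := hne _ hg
    exact lt_irrefl _ ha.2
  haveI : IsTrans (Ordinal.{0} → Ordinal.{0}) r := by
    constructor
    intro g1 g2 g3 h12 h23
    have := hU2 _ h12 _ h23
    refine hup _ this _ ?_ ?_
    · intro a ha
      simp only [Set.mem_setOf_eq] at ha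
      exact ha.1
    · intro a ha
      rw [Set.mem_inter_iff] at ha
      exact ⟨ha.1.1, ha.1.2.trans ha.2.2⟩
  haveI : IsStrictOrder (Ordinal.{0} → Ordinal.{0}) r := ⟨⟩
  set F : Set (Ordinal → Ordinal) :=
    {g | (∀ α < κ.ord, g α < κ.ord) ∧ ∀ γ, {α | α < κ.ord ∧ g α = γ} ∉ U} with hF
  have hwf : WellFounded r := by
    rw [RelEmbedding.wellFounded_iff_isEmpty]
    by_contra h
    rw [not_isEmpty_iff] at h
    obtain ⟨e⟩ := h
    have hXU : ∀ n : ℕ, {α | α < κ.ord ∧ e (n+1) α < e n α} ∈ U := by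
      intro n
      exact e.map_rel_iff.2 (Nat.lt_succ_self n)
    set q : Ordinal → Set Ordinal := fun β =>
      if h : β < Ordinal.omega0 then
        {α | α < κ.ord ∧ e ((Ordinal.lt_omega0.1 h).choose + 1) α < e ((Ordinal.lt_omega0.1 h).choose) α}
      else Set.univ with hq
    have hcap := hcomplete Ordinal.omega0 Ordinal.omega0_ne_zero
      (by rw [Ordinal.card_omega0]; exact hκ) q ?_
    · obtain ⟨a, ha⟩ := hne _ hcap
      simp only [mem_iInter] at ha
      have hdec : ∀ n : ℕ, e (n+1) a < e n a := by
        intro n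
        have hn : ((n : Ordinal)) < Ordinal.omega0 := Ordinal.nat_lt_omega0 n
        have := ha (n : Ordinal) hn
        rw [hq] at this
        simp only [hn, dif_pos] at this
        have hcn : (Ordinal.lt_omega0.1 hn).choose = n := by
          have := (Ordinal.lt_omega0.1 hn).choose_spec
          exact_mod_cast this.symm
        rw [hcn] at this
        exact this.2
      exact (RelEmbedding.wellFounded_iff_isEmpty.1 Ordinal.lt_wf).false
        (RelEmbedding.natGT (fun n => e n a) hdec)
    · intro β hβ
      rw [hq]
      simp only [hβ, dif_pos]
      exact hXU _
  have hFne : (fun α : Ordinal => α) ∈ F := by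
    constructor
    · exact fun α h => h
    · intro γ h
      by_cases hγ : γ < κ.ord
      · refine hnonprincipal γ (hup _ h {γ} (by simpa using hγ) ?_)
        intro a ha
        exact ha.2
      · obtain ⟨a, ha⟩ := hne _ h
        exact hγ (ha.2 ▸ ha.1)
  set f : Ordinal → Ordinal := hwf.min F ⟨_, hFne⟩ with hfdef
  have hfF : f ∈ F := hwf.min_mem F ⟨_, hFne⟩
  have hmin : ∀ g ∈ F, ¬ r g f := fun g hg => hwf.not_lt_min F hg
  -- the normal filter predicate
  set Dm : Set Ordinal → Prop := fun Z => {α | α < κ.ord ∧ f α ∈ Z} ∈ U with hDm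
  have dmono : ∀ {Z Z' : Set Ordinal}, Z ⊆ Z' → Dm Z → Dm Z' := by
    intro Z Z' hZZ h
    exact hup _ h _ (fun a ha => ha.1) (fun a ha => ⟨ha.1, hZZ ha.2⟩)
  have dtop : Dm (Set.Iio κ.ord) := by
    refine hup _ htop _ (fun a ha => ha.1) ?_
    intro a ha
    exact ⟨ha, hfF.1 a ha⟩
  have dne : ∀ {Z}, Dm Z → ∃ α, α < κ.ord ∧ α ∈ Z := by
    intro Z h
    obtain ⟨a, ha⟩ := hne _ h
    exact ⟨f a, hfF.1 a ha.1, ha.2⟩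
  have dint2 : ∀ {Z Z'}, Dm Z → Dm Z' → Dm (Z ∩ Z') := by
    intro Z Z' h h'
    have h2 := hU2 _ h _ h'
    refine hup _ h2 _ ?_ ?_
    · intro a ha
      simp only [Set.mem_setOf_eq] at ha
      exact ha.1
    · intro a ha
      rw [Set.mem_inter_iff] at ha
      exact ⟨ha.1.1, ha.1.2, ha.2.2⟩
  have dcomp : ∀ {Z}, ¬ Dm Z → Dm {α | α < κ.ord ∧ α ∉ Z} := by
    intro Z h
    rcases hultra {α | α < κ.ord ∧ f α ∈ Z} (fun a ha => ha.1) with h' | h'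
    · exact absurd h' h
    · refine hup _ h' _ (fun a ha => ha.1) ?_
      intro a ha
      refine ⟨ha.1, hfF.1 a ha.1, fun hfa => ha.2 ⟨ha.1, hfa⟩⟩
  have dnotsing : ∀ γ : Ordinal, ¬ Dm {γ} := by
    intro γ h
    refine hfF.2 γ ?_
    refine hup _ h _ (fun a ha => ha.1) ?_
    intro a ha
    exact ⟨ha.1, ha.2⟩
  have dcap : ∀ ι : Ordinal, ι ≠ 0 → ι.card < κ → ∀ q : Ordinal → Set Ordinal,
      (∀ β < ι, Dm (q β)) → Dm (⋂ β ∈ Set.Iio ι, q β) := by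
    intro ι hι0 hικ q hq
    have := hcomplete ι hι0 hικ (fun β => {α | α < κ.ord ∧ f α ∈ q β}) (fun β hβ => hq β hβ)
    refine hup _ this _ ?_ ?_
    · intro a ha
      simp only [Set.mem_setOf_eq] at ha
      exact ha.1
    · intro a ha
      simp only [Set.mem_iInter, Set.mem_setOf_eq] at ha ⊢
      refine ⟨(ha 0 (pos_iff_ne_zero.2 hι0)).1, ?_⟩
      intro β hβ
      exact (ha β hβ).2
  have dnormal : ∀ Z : Set Ordinal, Dm Z → ∀ h : Ordinal → Ordinal,
      (∀ α < κ.ord, α ∈ Z → h α < α) → ∃ γ < κ.ord, Dm (Z ∩ {α | h α = γ}) := by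
    intro Z hZ h hreg
    set h' : Ordinal → Ordinal := fun β => if β ∈ Z ∧ β < κ.ord then h β else 0 with hh'
    have hr1 : ∀ α < κ.ord, h' α < κ.ord := by
      intro α hα
      rw [hh']
      dsimp only
      split
      · next hc => exact (hreg α hc.2 hc.1).trans hc.2
      · exact hκ0
    have hcomp : r (fun α => h' (f α)) f := by
      rw [hr]
      refine hup _ hZ _ (fun a ha => ha.1) ?_
      intro a ha
      refine ⟨ha.1, ?_⟩
      have hfa : f a < κ.ord := hfF.1 a ha.1
      rw [hh']
      dsimp only
      rw [if_pos ⟨ha.2, hfa⟩]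
      exact hreg _ hfa ha.2
    have hnF : (fun α => h' (f α)) ∉ F := fun hmem => hmin _ hmem hcomp
    rw [hF] at hnF
    simp only [mem_setOf_eq, not_and, not_forall, not_not] at hnF
    obtain ⟨γ, hγ⟩ := hnF (fun α hα => hr1 _ (hfF.1 α hα))
    have hDZγ : Dm (Z ∩ {α | h α = γ}) := by
      have hsub2 : {α | α < κ.ord ∧ h' (f α) = γ} ∩ {α | α < κ.ord ∧ f α ∈ Z}
          ⊆ {α | α < κ.ord ∧ f α ∈ Z ∩ {α | h α = γ}} := by
        intro a ha
        refine ⟨ha.1.1, ha.2.2, ?_⟩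
        have := ha.1.2
        rw [hh'] at this
        dsimp only at this
        rw [if_pos ⟨ha.2.2, hfF.1 a ha.1.1⟩] at this
        exact this
      exact hup _ (hU2 _ hγ _ hZ) _ (fun a ha => ha.1) hsub2
    obtain ⟨α, hα1, hα2⟩ := dne hDZγ
    exact ⟨γ, hα2.2 ▸ (hreg α hα1 hα2.1).trans hα1, hDZγ⟩
  -- tails are in D
  have dtail : ∀ γ < κ.ord, Dm {β | β < κ.ord ∧ γ ≤ β} := by
    intro γ hγ
    have hnIio : ¬ Dm (Set.Iio γ) := by
      intro h
      rcases eq_or_ne γ 0 with rfl | hγ0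
      · obtain ⟨a, _, ha⟩ := dne h
        exact not_lt_zero (α := Ordinal) ha
      · have hq : ∀ β < γ, Dm {α | α < κ.ord ∧ α ∉ ({β} : Set Ordinal)} :=
          fun β _ => dcomp (dnotsing β)
        have := dcap γ hγ0 (Cardinal.lt_ord.1 hγ) _ hq
        obtain ⟨a, ha1, ha2⟩ := dne (dint2 this h)
        simp only [Set.mem_inter_iff, Set.mem_iInter, Set.mem_setOf_eq] at ha2
        exact ((ha2.1 a ha2.2).2) rfl
    have := dcomp hnIio
    refine dmono ?_ this
    intro a ha
    exact ⟨ha.1, not_lt.1 ha.2⟩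
  -- κ is a regular cardinal
  have hreg : κ.IsRegular := by
    refine ⟨hκ.le, ?_⟩
    by_contra hcof
    push_neg at hcof
    obtain ⟨f₀, hf₀⟩ := Ordinal.exists_blsub_cof κ.ord
    have hℵ : Cardinal.aleph0 ≤ κ.ord.cof := Ordinal.aleph0_le_cof.2 hordlim
    have hι0 : (κ.ord.cof).ord ≠ 0 := by
      intro h
      have h2 : κ.ord.cof = 0 := by
        have := congrArg Ordinal.card h
        simpa using this
      exact Cardinal.aleph0_pos.not_ge (h2 ▸ hℵ)
    have hικ : (κ.ord.cof).ord.card < κ := by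
      rw [Cardinal.card_ord]
      exact hcof
    have hcc := hcomplete (κ.ord.cof).ord hι0 hικ
      (fun β => Set.Iio κ.ord \ Set.Iio ((if h : β < (κ.ord.cof).ord then f₀ β h else 0) + 1)) ?_
    · obtain ⟨a, ha⟩ := hne _ hcc
      simp only [Set.mem_iInter, Set.mem_diff, Set.mem_Iio] at ha
      have hka : κ.ord ≤ a := by
        rw [← hf₀, Ordinal.blsub_le_iff]
        intro i hi
        have h3 := ha i hi
        rw [dif_pos hi] at h3
        have h2 := not_lt.1 h3.2
        refine lt_of_lt_of_le ?_ h2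
        rw [Ordinal.add_one_eq_succ]
        exact Order.lt_succ _
      exact (ha 0 (pos_iff_ne_zero.2 hι0)).1.not_ge hka
    · intro β hβ
      refine hsmall _ ?_
      have hfβ : f₀ β hβ < κ.ord := hf₀ ▸ Ordinal.lt_blsub f₀ β hβ
      rw [dif_pos hβ, Ordinal.add_one_eq_succ]
      exact hordlim.succ_lt hfβ
  have hcofeq : κ.ord.cof = κ := hreg.cof_eq
  -- diagonal intersections
  have ddiag : ∀ q : Ordinal → Set Ordinal, (∀ β < κ.ord, Dm (q β)) →
      Dm {α | α < κ.ord ∧ ∀ β < α, α ∈ q β} := by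
    intro q hq
    by_contra h
    have hcompl := dcomp h
    set g : Ordinal → Ordinal := fun α => sInf {β | β < α ∧ α ∉ q β} with hg
    have hkey : ∀ α, α < κ.ord → α ∉ {α | α < κ.ord ∧ ∀ β < α, α ∈ q β} →
        g α ∈ {β | β < α ∧ α ∉ q β} := by
      intro α hα hmem
      have h1 : ¬ (∀ β < α, α ∈ q β) := fun hall => hmem ⟨hα, hall⟩
      push_neg at h1
      obtain ⟨β, hβ, hβq⟩ := h1
      exact csInf_mem ⟨β, hβ, hβq⟩
    have hgreg : ∀ α < κ.ord, α ∈ {α | α < κ.ord ∧ α ∉ {α | α < κ.ord ∧ ∀ β < α, α ∈ q β}} →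
        g α < α := by
      intro α hα hmem
      exact (hkey α hα hmem.2).1
    obtain ⟨γ, hγκ, hγ⟩ := dnormal _ hcompl g hgreg
    have hqγ := hq γ hγκ
    obtain ⟨a, haκ, ha⟩ := dne (dint2 hγ hqγ)
    obtain ⟨⟨ha1, ha2⟩, ha3⟩ := ha
    have := hkey a haκ ha1.2
    rw [ha2] at this
    exact this.2 ha3
  -- clubs are in D
  have dclub : ∀ T : Set Ordinal, (∀ γ < κ.ord, ∃ δ, δ ∈ T ∧ γ < δ ∧ δ < κ.ord) →
      (∀ α < κ.ord, α ≠ 0 → (∀ β < α, ∃ γ ∈ T, β < γ ∧ γ < α) → α ∈ T) → Dm T := by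
    intro T hTu hTc
    by_contra h
    have hcompl := dcomp h
    obtain ⟨δ₀, hδ₀T, hδ₀0, hδ₀κ⟩ := hTu 0 hκ0
    have hδ₀1 : δ₀ + 1 < κ.ord := by
      rw [Ordinal.add_one_eq_succ]; exact hordlim.succ_lt hδ₀κ
    have hZ : Dm ({α | α < κ.ord ∧ α ∉ T} ∩ {β | β < κ.ord ∧ δ₀ + 1 ≤ β}) :=
      dint2 hcompl (dtail _ hδ₀1)
    set g : Ordinal → Ordinal := fun α => sSup (T ∩ Set.Iio α) with hg
    have hTne : ∀ α, δ₀ < α → (T ∩ Set.Iio α).Nonempty := by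
      intro α hδα
      exact ⟨δ₀, hδ₀T, hδα⟩
    have hgreg : ∀ α < κ.ord, α ∈ ({α | α < κ.ord ∧ α ∉ T} ∩ {β | β < κ.ord ∧ δ₀ + 1 ≤ β}) →
        g α < α := by
      intro α hα hmem
      have hδα : δ₀ < α := lt_of_lt_of_le (by rw [Ordinal.add_one_eq_succ]; exact Order.lt_succ _) hmem.2.2
      have hle : g α ≤ α := csSup_le (hTne α hδα) (fun b hb => hb.2.le)
      rcases lt_or_eq_of_le hle with h' | h'
      · exact h'
      · exfalso
        refine hmem.1.2 (hTc α hα (fun h0 => absurd (h0 ▸ hδα) not_lt_zero) ?_)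
        intro β hβ
        simp only [hg] at h'
        have hβ' : β < sSup (T ∩ Set.Iio α) := by rw [h']; exact hβ
        obtain ⟨c, hc1, hc2⟩ := exists_lt_of_lt_csSup (hTne α hδα) hβ'
        exact ⟨c, hc1.1, hc2, hc1.2⟩
    obtain ⟨γ, hγκ, hγ⟩ := dnormal _ hZ g hgreg
    obtain ⟨δ₁, hδ₁T, hδ₁γ, hδ₁κ⟩ := hTu γ hγκ
    have hδ₁1 : δ₁ + 1 < κ.ord := by
      rw [Ordinal.add_one_eq_succ]; exact hordlim.succ_lt hδ₁κ
    obtain ⟨a, haκ, ha⟩ := dne (dint2 hγ (dtail _ hδ₁1))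
    obtain ⟨⟨ha1, ha2⟩, ha3⟩ := ha
    have hδ₁a : δ₁ < a := lt_of_lt_of_le (by rw [Ordinal.add_one_eq_succ]; exact Order.lt_succ _) ha3.2
    have : δ₁ ≤ g a := by
      refine le_csSup ⟨a, fun x hx => hx.2.le⟩ ⟨hδ₁T, hδ₁a⟩
    rw [ha2] at this
    exact (lt_of_lt_of_le hδ₁γ this).false
  -- fundamental sequences
  have hPfund : ∀ α : Ordinal, Order.IsSuccLimit α → ∃ f : Ordinal → Ordinal,
      (∀ i < α.cof.ord, f i < α) ∧ ∀ β < α, ∃ i < α.cof.ord, β ≤ f i := by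
    intro α hα
    obtain ⟨f₀, hf₀⟩ := Ordinal.exists_blsub_cof α
    refine ⟨fun i => if h : i < α.cof.ord then f₀ i h else 0, ?_, ?_⟩
    · intro i hi
      show (if h : i < α.cof.ord then f₀ i h else 0) < α
      rw [dif_pos hi]
      exact hf₀ ▸ Ordinal.lt_blsub f₀ i hi
    · intro β hβ
      have hβ' : β < Ordinal.blsub _ f₀ := by rw [hf₀]; exact hβ
      rw [Ordinal.lt_blsub_iff] at hβ'
      obtain ⟨i, hi, hlt⟩ := hβ'
      refine ⟨i, hi, ?_⟩
      show β ≤ (if h : i < α.cof.ord then f₀ i h else 0)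
      rw [dif_pos hi]
      exact hlt
  -- the set of infinite regular cardinals is in D
  have dREG : Dm {β | β < κ.ord ∧ IsRegOrd β} := by
    by_contra h
    have hcompl := dcomp h
    have hlimD : Dm {α | α < κ.ord ∧ ∀ β < α, α ∈ {x | x < κ.ord ∧ β + 1 + 1 ≤ x}} := by
      refine ddiag _ ?_
      intro β hβ
      refine dtail _ ?_
      rw [Ordinal.add_one_eq_succ, Ordinal.add_one_eq_succ]
      exact hordlim.succ_lt (hordlim.succ_lt hβ)
    have hωκ : Ordinal.omega0 < κ.ord := by
      rw [Cardinal.lt_ord, Ordinal.card_omega0]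
      exact hκ
    have hW := dint2 (dint2 hcompl hlimD) (dtail _ hωκ)
    set W := ({α | α < κ.ord ∧ α ∉ {β | β < κ.ord ∧ IsRegOrd β}} ∩
        {α | α < κ.ord ∧ ∀ β < α, α ∈ {x | x < κ.ord ∧ β + 1 + 1 ≤ x}}) ∩
        {β | β < κ.ord ∧ Ordinal.omega0 ≤ β} with hWdef
    have hWlim : ∀ α ∈ W, Order.IsSuccLimit α := by
      intro α hα
      obtain ⟨⟨hα1, hα2⟩, hα3⟩ := hα
      rw [Ordinal.isSuccLimit_iff, Order.isSuccPrelimit_iff_succ_lt]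
      constructor
      · intro h0
        rw [h0] at hα3
        exact (Ordinal.omega0_pos).not_ge hα3.2
      · intro b hb
        have := (hα2.2 b hb).2
        rw [Ordinal.add_one_eq_succ, Ordinal.add_one_eq_succ] at this
        exact lt_of_lt_of_le (Order.lt_succ _) this
    have hWreg : ∀ α < κ.ord, α ∈ W → α.cof.ord < α := by
      intro α hκα hα
      have hlim := hWlim α hα
      rcases lt_or_eq_of_le (Ordinal.ord_cof_le α) with h' | h'
      · exact h'
      · exact absurd ⟨α.cof, Cardinal.isRegular_cof hlim, h'.symm⟩
          (fun hre => hα.1.1.2 ⟨hκα, hre⟩)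
    obtain ⟨lam, hlamκ, hW₁⟩ := dnormal _ hW _ hWreg
    set W₁ := W ∩ {α | α.cof.ord = lam} with hW₁def
    obtain ⟨a₀, ha₀κ, ha₀⟩ := dne hW₁
    have hlam0 : lam ≠ 0 := by
      intro h0
      have := ha₀.2
      simp only [Set.mem_setOf_eq, h0] at this
      have hℵ : Cardinal.aleph0 ≤ a₀.cof := Ordinal.aleph0_le_cof.2 (hWlim a₀ ha₀.1)
      have : a₀.cof = 0 := by
        have := congrArg Ordinal.card this
        simpa using this
      rw [this] at hℵ
      exact Cardinal.aleph0_pos.not_ge hℵ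
    have hlamcard : lam.card < κ := Cardinal.lt_ord.1 hlamκ
    have hPfund' : ∀ α : Ordinal, ∃ g : Ordinal → Ordinal, Order.IsSuccLimit α →
        (∀ i < α.cof.ord, g i < α) ∧ ∀ β < α, ∃ i < α.cof.ord, β ≤ g i := by
      intro α
      by_cases h : Order.IsSuccLimit α
      · exact ⟨(hPfund α h).choose, fun _ => (hPfund α h).choose_spec⟩
      · exact ⟨fun _ => 0, fun h' => absurd h' h⟩
    set gfun : Ordinal → Ordinal → Ordinal := fun α => (hPfund' α).choose with hgfun
    have hgspec : ∀ α, Order.IsSuccLimit α → (∀ i < α.cof.ord, gfun α i < α) ∧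
        ∀ β < α, ∃ i < α.cof.ord, β ≤ gfun α i := fun α hα => (hPfund' α).choose_spec hα
    have hchoice : ∀ i < lam, ∃ γ < κ.ord, Dm (W₁ ∩ {α | gfun α i = γ}) := by
      intro i hi
      refine dnormal _ hW₁ _ ?_
      intro α hκα hα
      have hlim := hWlim α hα.1
      refine (hgspec α hlim).1 i ?_
      rw [hα.2]
      exact hi
    have hchoice' : ∀ i : Ordinal, ∃ γ, i < lam → (γ < κ.ord ∧ Dm (W₁ ∩ {α | gfun α i = γ})) := by
      intro i
      by_cases h : i < lam
      · obtain ⟨γ, hγ1, hγ2⟩ := hchoice i h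
        exact ⟨γ, fun _ => ⟨hγ1, hγ2⟩⟩
      · exact ⟨0, fun h' => absurd h' h⟩
    set γfun : Ordinal → Ordinal := fun i => (hchoice' i).choose with hγfun
    have hγspec : ∀ i, i < lam → γfun i < κ.ord ∧ Dm (W₁ ∩ {α | gfun α i = γfun i}) :=
      fun i hi => (hchoice' i).choose_spec hi
    have hZcap : Dm (⋂ i ∈ Set.Iio lam, (W₁ ∩ {α | gfun α i = γfun i})) :=
      dcap lam hlam0 hlamcard _ (fun i hi => (hγspec i hi).2)
    set s : Ordinal := Ordinal.blsub lam (fun i _ => γfun i) with hs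
    have hsκ : s < κ.ord := by
      refine Ordinal.blsub_lt_ord ?_ ?_
      · rw [hcofeq]; exact hlamcard
      · intro i hi
        exact (hγspec i hi).1
    have hs1κ : s + 1 < κ.ord := by
      rw [Ordinal.add_one_eq_succ]; exact hordlim.succ_lt hsκ
    obtain ⟨a, haκ, ha⟩ := dne (dint2 hZcap (dtail _ hs1κ))
    have haW₁ : a ∈ W₁ := by
      have := ha.1
      simp only [Set.mem_iInter] at this
      exact (this 0 (pos_iff_ne_zero.2 hlam0)).1
    have hsa : s < a := by
      have := ha.2.2
      exact lt_of_lt_of_le (by rw [Ordinal.add_one_eq_succ]; exact Order.lt_succ _) this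
    have hlim := hWlim a haW₁.1
    obtain ⟨i, hi, hile⟩ := (hgspec a hlim).2 s hsa
    rw [haW₁.2] at hi
    have hgai : gfun a i = γfun i := by
      have := ha.1
      simp only [Set.mem_iInter] at this
      exact (this i hi).2
    rw [hgai] at hile
    exact (lt_of_le_of_lt hile (Ordinal.lt_blsub (fun i _ => γfun i) i hi)).false
  -- limit points of unbounded sets are in D
  have hLP : ∀ T : Set Ordinal, (∀ γ < κ.ord, ∃ δ, δ ∈ T ∧ γ < δ ∧ δ < κ.ord) →
      Dm {α | α < κ.ord ∧ α ≠ 0 ∧ ∀ β < α, ∃ γ ∈ T, β < γ ∧ γ < α} := by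
    intro T hTu
    apply dclub
    · -- unbounded
      intro γ hγ
      have hstep : ∀ x : Ordinal, x < κ.ord → ∃ δ, δ ∈ T ∧ x < δ ∧ δ < κ.ord := hTu
      set c : ℕ → Ordinal := fun n => Nat.rec ((hTu γ hγ).choose)
        (fun _ prev => if h : prev < κ.ord then (hstep prev h).choose else 0) n with hc
      have hc0 : c 0 ∈ T ∧ γ < c 0 ∧ c 0 < κ.ord := by
        have := (hTu γ hγ).choose_spec
        exact ⟨this.1, this.2.1, this.2.2⟩
      have hcs : ∀ n, c n < κ.ord → (c (n+1) ∈ T ∧ c n < c (n+1) ∧ c (n+1) < κ.ord) := by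
        intro n hn
        have hval0 : c (n+1) = if h : c n < κ.ord then (hstep (c n) h).choose else 0 := rfl
        rw [hval0, dif_pos hn]
        have := (hstep (c n) hn).choose_spec
        exact ⟨this.1, this.2.1, this.2.2⟩
      have hall : ∀ n, c n ∈ T ∧ c n < κ.ord := by
        intro n
        induction n with
        | zero => exact ⟨hc0.1, hc0.2.2⟩
        | succ m ih =>
          have := hcs m ih.2
          exact ⟨this.1, this.2.2⟩
      have hmono : ∀ n, c n < c (n+1) := fun n => (hcs n (hall n).2).2.1
      set s : Ordinal := ⨆ n, c n with hsdef
      have hsκ : s < κ.ord := by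
        refine Ordinal.iSup_lt_ord ?_ (fun n => (hall n).2)
        rw [hcofeq]
        simpa using hκ
      have hlts : ∀ n, c n < s := fun n => lt_of_lt_of_le (hmono n) (Ordinal.le_iSup c (n+1))
      refine ⟨s, ⟨hsκ, ?_, ?_⟩, ?_, hsκ⟩
      · exact ((zero_le : (0:Ordinal) ≤ c 0).trans_lt (hlts 0)).ne'
      · intro β hβ
        obtain ⟨n, hn⟩ := Ordinal.lt_iSup_iff.1 hβ
        exact ⟨c n, (hall n).1, hn, hlts n⟩
      · exact hc0.2.1.trans (hlts 0)
    · -- closed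
      intro α hα hα0 hlp
      refine ⟨hα, hα0, ?_⟩
      intro β hβ
      obtain ⟨γ', hγ'm, hβγ', hγ'α⟩ := hlp β hβ
      obtain ⟨δ, hδT, hβδ, hδγ'⟩ := hγ'm.2.2 β hβγ'
      exact ⟨δ, hδT, hβδ, hδγ'.trans hγ'α⟩
  -- ======== the main argument ========
  refine ⟨DA, fun α _ => DA_subset α, ?_⟩
  intro S hS C hC
  by_contra hno
  rw [Set.not_nonempty_iff_eq_empty, Set.eq_empty_iff_forall_notMem] at hno
  have hemp : ∀ β ∈ C, β < κ.ord → IsRegOrd β → S ∩ Set.Iio β ≠ DA β := by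
    intro β hβC hβκ hβr heq
    exact hno β ⟨⟨hβκ, hβr, heq⟩, hβC⟩
  obtain ⟨hCsub, hCunb, hCcl⟩ := hC
  have hCu : ∀ γ < κ.ord, ∃ δ, δ ∈ C ∧ γ < δ ∧ δ < κ.ord := by
    intro γ hγ
    obtain ⟨β, hβC, hβ⟩ := hCunb γ hγ
    exact ⟨β, hβC, hβ, hCsub hβC⟩
  set X : Set Ordinal := {β | β < κ.ord ∧ IsRegOrd β} ∩
    {α | α < κ.ord ∧ α ≠ 0 ∧ ∀ β < α, ∃ γ ∈ C, β < γ ∧ γ < α} with hXdef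
  have hXD : Dm X := dint2 dREG (hLP C hCu)
  have hGspec : ∀ α ∈ X, DCond DA α (DG α) := by
    intro α hα
    obtain ⟨⟨hακ, hαreg⟩, -, -, hαlp⟩ := hα
    apply DG_spec
    refine ⟨(S ∩ Set.Iio α, C ∩ Set.Iio α), inter_subset_right, inter_subset_right, ?_, ?_, ?_⟩
    · intro β hβ
      obtain ⟨γ, hγC, hβγ, hγα⟩ := hαlp β hβ
      exact ⟨γ, ⟨hγC, hγα⟩, hβγ⟩
    · intro δ hδα hδ0 hδlp
      refine ⟨hCcl δ (hδα.trans hακ) hδ0 ?_, hδα⟩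
      intro β hβ
      obtain ⟨γ, hγm, h1, h2⟩ := hδlp β hβ
      exact ⟨γ, hγm.1, h1, h2⟩
    · intro β hβ hβreg heq
      have hβα : β < α := hβ.2
      have heq2 : S ∩ Set.Iio β = DA β := by
        rw [← heq]
        ext x
        simp only [Set.mem_inter_iff, Set.mem_Iio]
        constructor
        · rintro ⟨h1, h3⟩
          exact ⟨⟨h1, h3.trans hβα⟩, h3⟩
        · rintro ⟨⟨h1, _⟩, h3⟩
          exact ⟨h1, h3⟩
      exact hemp β hβ.1 (hβα.trans hακ) hβreg heq2
  -- the coded guesses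
  set Sstar : Set Ordinal := {β | β < κ.ord ∧ Dm {α | β ∈ (DG α).1}} with hSstar
  set Cstar : Set Ordinal := {β | β < κ.ord ∧ Dm {α | β ∈ (DG α).2}} with hCstar
  set qAG : Ordinal → Set Ordinal := fun β =>
    {α | (β ∈ (DG α).1 ↔ β ∈ Sstar) ∧ (β ∈ (DG α).2 ↔ β ∈ Cstar)} with hqAG
  have hAG : Dm {α | α < κ.ord ∧ ∀ β < α, α ∈ qAG β} := by
    refine ddiag _ ?_
    intro β hβ
    have hq1 : Dm {α | β ∈ (DG α).1 ↔ β ∈ Sstar} := by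
      by_cases hmem : β ∈ Sstar
      · exact dmono (fun α hα => iff_of_true hα hmem) hmem.2
      · by_cases hD : Dm {α | β ∈ (DG α).1}
        · exact absurd ⟨hβ, hD⟩ hmem
        · exact dmono (fun α hα => iff_of_false hα.2 hmem) (dcomp hD)
    have hq2 : Dm {α | β ∈ (DG α).2 ↔ β ∈ Cstar} := by
      by_cases hmem : β ∈ Cstar
      · exact dmono (fun α hα => iff_of_true hα hmem) hmem.2
      · by_cases hD : Dm {α | β ∈ (DG α).2}
        · exact absurd ⟨hβ, hD⟩ hmem
        · exact dmono (fun α hα => iff_of_false hα.2 hmem) (dcomp hD)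
    exact dmono (fun α hα => ⟨hα.1, hα.2⟩) (dint2 hq1 hq2)
  -- Cstar is unbounded
  have hCstaru : ∀ γ < κ.ord, ∃ δ, δ ∈ Cstar ∧ γ < δ ∧ δ < κ.ord := by
    intro γ hγ
    have hγ1 : γ + 1 < κ.ord := by
      rw [Ordinal.add_one_eq_succ]; exact hordlim.succ_lt hγ
    have hXγ : Dm (X ∩ {β | β < κ.ord ∧ γ + 1 ≤ β}) := dint2 hXD (dtail _ hγ1)
    have hnemem : ∀ α, α ∈ X ∩ {β | β < κ.ord ∧ γ + 1 ≤ β} →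
        ({δ | δ ∈ (DG α).2 ∧ γ < δ}).Nonempty := by
      intro α hα
      have hγα : γ < α := lt_of_lt_of_le
        (by rw [Ordinal.add_one_eq_succ]; exact Order.lt_succ _) hα.2.2
      obtain ⟨δ, hδ, hγδ⟩ := (hGspec α hα.1).2.2.1 γ hγα
      exact ⟨δ, hδ, hγδ⟩
    set pick : Ordinal → Ordinal := fun α => sInf {δ | δ ∈ (DG α).2 ∧ γ < δ} with hpick
    have hpickreg : ∀ α < κ.ord, α ∈ X ∩ {β | β < κ.ord ∧ γ + 1 ≤ β} → pick α < α := by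
      intro α hακ hα
      have := csInf_mem (hnemem α hα)
      exact (hGspec α hα.1).2.1 this.1
    obtain ⟨δ₀, hδ₀κ, hDδ⟩ := dnormal _ hXγ pick hpickreg
    obtain ⟨a, haκ, haZ⟩ := dne hDδ
    have hmem0 := csInf_mem (hnemem a haZ.1)
    have ha2 : sInf {δ | δ ∈ (DG a).2 ∧ γ < δ} = δ₀ := haZ.2
    rw [ha2] at hmem0
    refine ⟨δ₀, ⟨hδ₀κ, ?_⟩, hmem0.2, hδ₀κ⟩
    refine dmono ?_ hDδ
    intro α hα
    have hmm := csInf_mem (hnemem α hα.1)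
    have ha3 : sInf {δ | δ ∈ (DG α).2 ∧ γ < δ} = δ₀ := hα.2
    rw [ha3] at hmm
    exact hmm.1
  -- Cstar is closed
  have hCstarcl : ∀ β < κ.ord, β ≠ 0 → (∀ β' < β, ∃ γ ∈ Cstar, β' < γ ∧ γ < β) → β ∈ Cstar := by
    intro β hβκ hβ0 hβlp
    have hβ1 : β + 1 < κ.ord := by
      rw [Ordinal.add_one_eq_succ]; exact hordlim.succ_lt hβκ
    have hqb : ∀ γ < β, Dm {α | γ ∈ Cstar → γ ∈ (DG α).2} := by
      intro γ _
      by_cases hmem : γ ∈ Cstar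
      · exact dmono (fun α hα h => hα) hmem.2
      · exact dmono (fun α _ h => absurd h hmem) dtop
    have hZb : Dm ((X ∩ {x | x < κ.ord ∧ β + 1 ≤ x}) ∩
        (⋂ γ ∈ Set.Iio β, {α | γ ∈ Cstar → γ ∈ (DG α).2})) :=
      dint2 (dint2 hXD (dtail _ hβ1)) (dcap β hβ0 (Cardinal.lt_ord.1 hβκ) _ hqb)
    refine ⟨hβκ, dmono ?_ hZb⟩
    rintro α ⟨⟨hαX, hαtail⟩, hαcap⟩
    simp only [Set.mem_iInter, Set.mem_setOf_eq] at hαcap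
    have hβα : β < α := lt_of_lt_of_le
      (by rw [Ordinal.add_one_eq_succ]; exact Order.lt_succ _) hαtail.2
    refine (hGspec α hαX).2.2.2.1 β hβα hβ0 ?_
    intro β' hβ'
    obtain ⟨γ, hγCs, h1, h2⟩ := hβlp β' hβ'
    exact ⟨γ, hαcap γ h2 hγCs, h1, h2⟩
  -- the key property
  have hkey : ∀ β ∈ Cstar, IsRegOrd β → Sstar ∩ Set.Iio β ≠ DA β := by
    intro β hβCs hβreg heq
    have hβκ := hβCs.1
    have hβ1 : β + 1 < κ.ord := by
      rw [Ordinal.add_one_eq_succ]; exact hordlim.succ_lt hβκ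
    have hZ : Dm (((X ∩ {α | β ∈ (DG α).2}) ∩ {α | α < κ.ord ∧ ∀ x < α, α ∈ qAG x}) ∩
        {x | x < κ.ord ∧ β + 1 ≤ x}) :=
      dint2 (dint2 (dint2 hXD hβCs.2) hAG) (dtail _ hβ1)
    obtain ⟨a, haκ, ⟨⟨⟨haX, haC⟩, haAG⟩, hatail⟩⟩ := dne hZ
    have hβa : β < a := lt_of_lt_of_le
      (by rw [Ordinal.add_one_eq_succ]; exact Order.lt_succ _) hatail.2
    refine (hGspec a haX).2.2.2.2 β haC hβreg ?_
    rw [← heq]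
    ext x
    simp only [Set.mem_inter_iff, Set.mem_Iio]
    constructor
    · rintro ⟨h1, h2⟩
      exact ⟨((haAG.2 x (h2.trans hβa)).1.1 h1), h2⟩
    · rintro ⟨h1, h2⟩
      exact ⟨((haAG.2 x (h2.trans hβa)).1.2 h1), h2⟩
  -- wrap up
  have hfinal : Dm ((X ∩ {α | α < κ.ord ∧ α ≠ 0 ∧ ∀ β < α, ∃ γ ∈ Cstar, β < γ ∧ γ < α}) ∩
      {α | α < κ.ord ∧ ∀ x < α, α ∈ qAG x}) :=
    dint2 (dint2 hXD (hLP Cstar hCstaru)) hAG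
  obtain ⟨a, haκ, ⟨⟨haX, haLP⟩, haAG⟩⟩ := dne hfinal
  have haCs : a ∈ Cstar := hCstarcl a haκ haLP.2.1 haLP.2.2
  refine hkey a haCs haX.1.2 ?_
  have hsub1 := (hGspec a haX).1
  ext x
  simp only [Set.mem_inter_iff, Set.mem_Iio]
  constructor
  · rintro ⟨h1, h2⟩
    exact (haAG.2 x h2).1.2 h1
  · intro h1
    have h2 : x < a := hsub1 h1
    exact ⟨(haAG.2 x h2).1.1 h1, h2⟩
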